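/- Let P, Q, ν be probability measures on measurable spaces 𝒴, 𝒴, 𝒰 respectively, let G : 𝒰 → Set 𝒴 and J : 𝒴 → Set 𝒴 be correspondences, and let β ∈ [0,1). If for every measurable set A ⊆ 𝒴 we have Q(A) ≤ P({y : J(y) ∩ A ≠ ∅}) + β, and for every measurable set B ⊆ 𝒴 we have P(B) ≤ ν({u : G(u) ∩ B ≠ ∅}), then for every measurable set A ⊆ 𝒴 we have Q(A) ≤ ν({u : (J ∘ G)(u) ∩ A ≠ ∅}) + β, where (J ∘ G)(u) = ⋃_{y ∈ G(u)} J(y). -/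

import Mathlib

open MeasureTheory Set

/-- Measure-theoretic core of the Composition Theorem (Galichon–Henry). -/
theorem composition_dual
    {𝒴 𝒰 : Type*} [MeasurableSpace 𝒴] [MeasurableSpace 𝒰]
    (P Q : Measure 𝒴) (ν : Measure 𝒰)
    [IsProbabilityMeasure P] [IsProbabilityMeasure Q] [IsProbabilityMeasure ν]
    (G : 𝒰 → Set 𝒴) (J : 𝒴 → Set 𝒴) (β : ENNReal) (hβ : β < 1)
    (hJmeas : ∀ A : Set 𝒴, MeasurableSet A → MeasurableSet {y | (J y ∩ A).Nonempty})
    (h1 : ∀ A : Set 𝒴, MeasurableSet A → Q A ≤ P {y | (J y ∩ A).Nonempty} + β)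
    (h2 : ∀ B : Set 𝒴, MeasurableSet B → P B ≤ ν {u | (G u ∩ B).Nonempty}) :
    ∀ A : Set 𝒴, MeasurableSet A →
      Q A ≤ ν {u | ((⋃ y ∈ G u, J y) ∩ A).Nonempty} + β := by
  intro A hA
  set B := {y | (J y ∩ A).Nonempty} with hB
  have hBmeas := hJmeas A hA
  have step1 := h1 A hA
  have step2 := h2 B hBmeas
  have subset : {u | (G u ∩ B).Nonempty} ⊆ {u | ((⋃ y ∈ G u, J y) ∩ A).Nonempty} := by
    rintro u ⟨y, hyG, hyB⟩
    obtain ⟨z, hzJ, hzA⟩ := hyB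
    exact ⟨z, mem_iUnion₂.mpr ⟨y, hyG, hzJ⟩, hzA⟩
  calc Q A ≤ P B + β := step1
    _ ≤ ν {u | (G u ∩ B).Nonempty} + β := add_le_add_left step2 β
    _ ≤ _ := add_le_add_left (measure_mono subset) β
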